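/- Let V₀ and V₁ be finite vertex types and let (S₀, φ) be a common induced subgraph matching of (G₀, G₁). For each function c : S₀ → Bool let Lcell(c) = {v ∈ V₀ \ S₀ : λ(v) = c} and Rcell(c) = {w ∈ V₁ \ φ(S₀) : μ(w) = c}. Then every common induced subgraph matching (S₀', ψ) extending (S₀, φ) (i.e., S₀ ⊆ S₀' and ψ agrees with φ on S₀) satisfies |S₀'| ≤ |S₀| + Σ_{c : S₀ → Bool} min(|Lcell(c)|, |Rcell(c)|). (This is the soundness of the bidomain upper bound overEstimate(𝒟) = Σ_{⟨V_l,V_r⟩∈𝒟} min(|V_l|,|V_r|) used for pruning.) -/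

import Mathlib

/-- `(S₀, φ)` is a common induced subgraph matching of `(G₀, G₁)`:
`φ` is injective on `S₀` and preserves adjacency and non-adjacency on `S₀`. -/
def IsCommonMatching {V₀ V₁ : Type*} (G₀ : SimpleGraph V₀) (G₁ : SimpleGraph V₁)
    (S₀ : Finset V₀) (φ : V₀ → V₁) : Prop :=
  Set.InjOn φ ↑S₀ ∧ ∀ u ∈ S₀, ∀ v ∈ S₀, (G₀.Adj u v ↔ G₁.Adj (φ u) (φ v))

theorem bidomain_bound_sound {V₀ V₁ : Type*}
    [Fintype V₀] [Fintype V₁] [DecidableEq V₀] [DecidableEq V₁]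
    (G₀ : SimpleGraph V₀) (G₁ : SimpleGraph V₁)
    [DecidableRel G₀.Adj] [DecidableRel G₁.Adj]
    (S₀ : Finset V₀) (φ : V₀ → V₁)
    (hmatch : IsCommonMatching G₀ G₁ S₀ φ)
    -- the label of an unmatched vertex of `G₀` w.r.t. `(S₀, φ)`
    (lab₀ : V₀ → (↥S₀ → Bool)) (hlab₀ : ∀ v u, lab₀ v u = decide (G₀.Adj v ↑u))
    -- the label of an unmatched vertex of `G₁` w.r.t. `(S₀, φ)`
    (lab₁ : V₁ → (↥S₀ → Bool)) (hlab₁ : ∀ w u, lab₁ w u = decide (G₁.Adj w (φ ↑u)))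
    -- the two sides of the bidomain (label class) of label `c`
    (Lcell : (↥S₀ → Bool) → Finset V₀)
    (hLcell : ∀ c, Lcell c = Finset.univ.filter (fun v => v ∉ S₀ ∧ lab₀ v = c))
    (Rcell : (↥S₀ → Bool) → Finset V₁)
    (hRcell : ∀ c, Rcell c = Finset.univ.filter (fun w => w ∉ S₀.image φ ∧ lab₁ w = c)) :
    ∀ (S₀' : Finset V₀) (ψ : V₀ → V₁),
      IsCommonMatching G₀ G₁ S₀' ψ → S₀ ⊆ S₀' → (∀ u ∈ S₀, ψ u = φ u) →
        S₀'.card ≤ S₀.card + ∑ c : (↥S₀ → Bool), min (Lcell c).card (Rcell c).card := by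
  intro S₀' ψ hm' hsub hagree
  obtain ⟨hinj', hadj'⟩ := hm'
  have hcard : S₀'.card = S₀.card + (S₀' \ S₀).card := by
    have := Finset.card_le_card hsub
    rw [Finset.card_sdiff_of_subset hsub]
    omega
  rw [hcard]
  apply Nat.add_le_add_left
  rw [Finset.card_eq_sum_card_fiberwise
    (f := lab₀) (t := Finset.univ) (fun v _ => Finset.mem_univ _)]
  apply Finset.sum_le_sum
  intro c _
  set T := (S₀' \ S₀).filter (fun v => lab₀ v = c) with hT
  have hTmem : ∀ v ∈ T, v ∈ S₀' ∧ v ∉ S₀ ∧ lab₀ v = c := by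
    intro v hv
    simp only [hT, Finset.mem_filter, Finset.mem_sdiff] at hv
    exact ⟨hv.1.1, hv.1.2, hv.2⟩
  have hL : T ⊆ Lcell c := by
    intro v hv
    obtain ⟨h1, h2, h3⟩ := hTmem v hv
    rw [hLcell]
    simp [h2, h3]
  have hR : ∀ v ∈ T, ψ v ∈ Rcell c := by
    intro v hv
    obtain ⟨h1, h2, h3⟩ := hTmem v hv
    rw [hRcell]
    simp only [Finset.mem_filter, Finset.mem_univ, true_and]
    constructor
    · intro hmem
      rw [Finset.mem_image] at hmem
      obtain ⟨u, hu, heq⟩ := hmem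
      have : ψ v = ψ u := by rw [hagree u hu]; exact heq.symm
      have := hinj' (by exact_mod_cast h1) (by exact_mod_cast hsub hu) this
      exact h2 (this ▸ hu)
    · funext u
      rw [hlab₁, ← h3, hlab₀]
      have hu' : (u : V₀) ∈ S₀' := hsub u.2
      have := hadj' v h1 u hu'
      rw [hagree u u.2] at this
      simp [this]
  refine le_min (Finset.card_le_card hL) ?_
  have hinjT : Set.InjOn ψ ↑T := fun a ha b hb h =>
    hinj' (by exact_mod_cast (hTmem a ha).1) (by exact_mod_cast (hTmem b hb).1) h
  calc T.card = (T.image ψ).card := (Finset.card_image_of_injOn hinjT).symm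
    _ ≤ (Rcell c).card := Finset.card_le_card (by
        intro w hw
        rw [Finset.mem_image] at hw
        obtain ⟨v, hv, rfl⟩ := hw
        exact hR v hv)
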